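/- Decomposable model parameter formula: for a discrete graphical model Markov with respect to a decomposable graph G with cliques C and separators S, the joint probabilities factor as p(i) = (∏_{C} p^C(i_C)) / (∏_{S} p^S(i_S)), and consequently each log-linear parameter satisfies θ_j = Σ_{C ∈ 𝒞^j} θ^C_j − Σ_{S ∈ 𝒮^j} θ^S_j, where 𝒞^j (resp. 𝒮^j) is the set of cliques (resp. separators, counted with multiplicity) containing S(j), and θ^C_j, θ^S_j are the log-linear parameters of the marginal distributions on C and S. -/

import Mathlib

attribute [local instance] Classical.propDecidable

/-- The support of a cell. -/
noncomputable def supp {V : Type*} [Fintype V] {I : V → Type*}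
    (z : ∀ v, I v) (i : ∀ v, I v) : Finset V :=
  Finset.univ.filter (fun v => i v ≠ z v)

/-- `tri z j i` is the relation `j ◁ i`. -/
def tri {V : Type*} {I : V → Type*} (z : ∀ v, I v) (j i : ∀ v, I v) : Prop :=
  ∀ v, j v ≠ z v → j v = i v

/-- The `A`-marginal probability `p^A(i_A)` of a cell `i`. -/
noncomputable def pA {V : Type*} [Fintype V]
    {I : V → Type*} [∀ v, Fintype (I v)]
    (p : (∀ v, I v) → ℝ) (A : Finset V) (m : ∀ v, I v) : ℝ :=
  ∑ i ∈ Finset.univ.filter (fun i => ∀ v ∈ A, i v = m v), p i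

/-- The loglinear parameter `θ^A_j` of the `A`-marginal distribution, defined by
Möbius inversion; for `A = V` this is the joint loglinear parameter `θ_j`. -/
noncomputable def θA {V : Type*} [Fintype V] [DecidableEq V]
    {I : V → Type*} [∀ v, Fintype (I v)] [∀ v, DecidableEq (I v)]
    (z : ∀ v, I v) (p : (∀ v, I v) → ℝ) (A : Finset V) (j : ∀ v, I v) : ℝ :=
  ∑ j' ∈ Finset.univ.filter (fun j' => tri z j' j),
    (-1 : ℝ) ^ ((supp z j).card - (supp z j').card) * Real.log (pA p A j' / pA p A z)

/-- The cylinder of cells agreeing with `m` on `A`. -/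
noncomputable def cyl {V : Type*} [Fintype V] {I : V → Type*} [∀ v, Fintype (I v)]
    (A : Finset V) (m : ∀ v, I v) : Finset (∀ v, I v) :=
  Finset.univ.filter (fun i => ∀ v ∈ A, i v = m v)

section Helpers

set_option linter.unusedSectionVars false

variable {V : Type*} [Fintype V] [DecidableEq V]
  {I : V → Type*} [∀ v, Fintype (I v)]

lemma mem_cyl {A : Finset V} {m y : ∀ v, I v} : y ∈ cyl A m ↔ ∀ v ∈ A, y v = m v := by
  simp [cyl]

lemma pA_eq_sum_cyl (p : (∀ v, I v) → ℝ) (A : Finset V) (m : ∀ v, I v) :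
    pA p A m = ∑ i ∈ cyl A m, p i := rfl

lemma self_mem_cyl (A : Finset V) (m : ∀ v, I v) : m ∈ cyl A m :=
  mem_cyl.2 (fun _ _ => rfl)

lemma cyl_congr {A : Finset V} {m m' : ∀ v, I v} (h : ∀ v ∈ A, m v = m' v) :
    cyl A m = cyl A m' := by
  ext y
  simp only [mem_cyl]
  constructor
  · intro hy v hv; rw [hy v hv, h v hv]
  · intro hy v hv; rw [hy v hv, h v hv]

lemma pA_congr (p : (∀ v, I v) → ℝ) {A : Finset V} {m m' : ∀ v, I v}
    (h : ∀ v ∈ A, m v = m' v) : pA p A m = pA p A m' := by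
  rw [pA_eq_sum_cyl, pA_eq_sum_cyl, cyl_congr h]

lemma pA_pos {p : (∀ v, I v) → ℝ} (hp : ∀ i, 0 < p i) (A : Finset V) (m : ∀ v, I v) :
    0 < pA p A m :=
  Finset.sum_pos (fun i _ => hp i) ⟨m, self_mem_cyl A m⟩

lemma card_cyl_const (A : Finset V) (m m' : ∀ v, I v) :
    (cyl A m).card = (cyl A m').card := by
  apply Finset.card_nbij' (fun y v => if v ∈ A then m' v else y v)
    (fun y v => if v ∈ A then m v else y v)
  · intro y _; simp only [Finset.mem_coe, mem_cyl]; intro v hv; simp [hv]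
  · intro y _; simp only [Finset.mem_coe, mem_cyl]; intro v hv; simp [hv]
  · intro y hy; funext v
    by_cases hv : v ∈ A
    · simp [hv, (mem_cyl.1 hy v hv)]
    · simp [hv]
  · intro y hy; funext v
    by_cases hv : v ∈ A
    · simp [hv, (mem_cyl.1 hy v hv)]
    · simp [hv]

/-- If `g` only depends on coordinates in `B`, then `pA g A` only depends on
coordinates in `A ∩ B`. -/
lemma pA_local {g : (∀ v, I v) → ℝ} {B : Finset V}
    (hg : ∀ y y', (∀ v ∈ B, y v = y' v) → g y = g y')
    (A : Finset V) {m m' : ∀ v, I v} (h : ∀ v ∈ A ∩ B, m v = m' v) :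
    pA g A m = pA g A m' := by
  rw [pA_eq_sum_cyl, pA_eq_sum_cyl]
  apply Finset.sum_nbij' (i := fun y v => if v ∈ A then m' v else y v)
    (j := fun y v => if v ∈ A then m v else y v)
  · intro y _; simp only [mem_cyl]; intro v hv; simp [hv]
  · intro y _; simp only [mem_cyl]; intro v hv; simp [hv]
  · intro y hy; funext v
    by_cases hv : v ∈ A
    · simp [hv, (mem_cyl.1 hy v hv)]
    · simp [hv]
  · intro y hy; funext v
    by_cases hv : v ∈ A
    · simp [hv, (mem_cyl.1 hy v hv)]
    · simp [hv]
  · intro y hy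
    apply hg
    intro v hv
    by_cases hvA : v ∈ A
    · simp only [hvA, if_true]
      rw [mem_cyl.1 hy v hvA]
      exact h v (Finset.mem_inter.2 ⟨hvA, hv⟩)
    · simp [hvA]

/-- Pull an `A`-local factor out of a marginal over `A`. -/
lemma pA_pull {F g : (∀ v, I v) → ℝ} {A : Finset V}
    (hF : ∀ y y', (∀ v ∈ A, y v = y' v) → F y = F y') (m : ∀ v, I v) :
    pA (fun y => F y * g y) A m = F m * pA g A m := by
  rw [pA_eq_sum_cyl, pA_eq_sum_cyl, Finset.mul_sum]
  apply Finset.sum_congr rfl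
  intro y hy
  rw [hF y m (mem_cyl.1 hy)]

end Helpers

section DC

set_option linter.unusedSectionVars false

variable {V : Type*} [Fintype V] [DecidableEq V]
  {I : V → Type*} [∀ v, Fintype (I v)]

/-- Double counting: marginalizing a `B`-marginal over `A`. -/
lemma pA_pA (q : (∀ v, I v) → ℝ) (A B : Finset V) (i : ∀ v, I v) :
    pA (fun y => pA q B y) A i = ((cyl (A ∪ B) i).card : ℝ) * pA q (A ∩ B) i := by
  have step1 : pA (fun y => pA q B y) A i
      = ∑ x : ∀ v, I v,
          (((cyl A i).filter (fun y => ∀ v ∈ B, x v = y v)).card) • q x := by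
    rw [pA_eq_sum_cyl]
    calc ∑ y ∈ cyl A i, pA q B y
        = ∑ y ∈ cyl A i, ∑ x : ∀ v, I v, if (∀ v ∈ B, x v = y v) then q x else 0 := by
          refine Finset.sum_congr rfl (fun y _ => ?_)
          rw [pA_eq_sum_cyl, cyl, Finset.sum_filter]
          congr!
      _ = ∑ x : ∀ v, I v, ∑ y ∈ cyl A i, if (∀ v ∈ B, x v = y v) then q x else 0 :=
          Finset.sum_comm
      _ = _ := by
          refine Finset.sum_congr rfl (fun x _ => ?_)
          rw [← Finset.sum_filter, Finset.sum_const]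
  rw [step1]
  have step2 : ∀ x : ∀ v, I v,
      (((cyl A i).filter (fun y => ∀ v ∈ B, x v = y v)).card) • q x
      = if (∀ v ∈ A ∩ B, x v = i v) then ((cyl (A ∪ B) i).card) • q x else 0 := by
    intro x
    by_cases hx : ∀ v ∈ A ∩ B, x v = i v
    · rw [if_pos hx]
      congr 1
      have hset : (cyl A i).filter (fun y => ∀ v ∈ B, x v = y v)
          = cyl (A ∪ B) (fun v => if v ∈ A then i v else x v) := by
        ext y
        simp only [Finset.mem_filter, mem_cyl, Finset.mem_union]
        constructor
        · rintro ⟨hyA, hyB⟩ v hv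
          by_cases hvA : v ∈ A
          · simp [hvA, hyA v hvA]
          · rcases hv with hv | hv
            · exact absurd hv hvA
            · simp [hvA, (hyB v hv).symm]
        · intro hy
          constructor
          · intro v hv
            have := hy v (Or.inl hv)
            simpa [hv] using this
          · intro v hv
            by_cases hvA : v ∈ A
            · have := hy v (Or.inl hvA)
              rw [if_pos hvA] at this
              rw [this, hx v (Finset.mem_inter.2 ⟨hvA, hv⟩)]
            · have := hy v (Or.inr hv)
              rw [if_neg hvA] at this
              rw [this]
      rw [hset]
      exact card_cyl_const _ _ _
    · rw [if_neg hx]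
      push_neg at hx
      obtain ⟨v, hv, hvne⟩ := hx
      have hempty : (cyl A i).filter (fun y => ∀ v ∈ B, x v = y v) = ∅ := by
        apply Finset.filter_false_of_mem
        intro y hy hall
        exact hvne (by
          rw [hall v (Finset.mem_inter.1 hv).2, mem_cyl.1 hy v (Finset.mem_inter.1 hv).1])
      rw [hempty]
      simp
  calc ∑ x : ∀ v, I v, (((cyl A i).filter (fun y => ∀ v ∈ B, x v = y v)).card) • q x
      = ∑ x : ∀ v, I v,
          if (∀ v ∈ A ∩ B, x v = i v) then ((cyl (A ∪ B) i).card) • q x else 0 :=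
        Finset.sum_congr rfl (fun x _ => step2 x)
    _ = ∑ x ∈ cyl (A ∩ B) i, ((cyl (A ∪ B) i).card) • q x := by
        rw [← Finset.sum_filter]
        refine Finset.sum_congr ?_ (fun _ _ => rfl)
        ext x
        simp [mem_cyl]
    _ = ((cyl (A ∪ B) i).card : ℝ) * pA q (A ∩ B) i := by
        rw [pA_eq_sum_cyl, Finset.mul_sum]
        refine Finset.sum_congr rfl (fun x _ => ?_)
        rw [nsmul_eq_mul]

end DC

section CI

set_option linter.unusedSectionVars false

variable {V : Type*} [Fintype V] [DecidableEq V] {I : V → Type*} [∀ v, Fintype (I v)]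

lemma card_cyl_pos (A : Finset V) (i : ∀ v, I v) : 0 < ((cyl A i).card : ℝ) := by
  have : (cyl A i).Nonempty := ⟨i, self_mem_cyl A i⟩
  exact_mod_cast Finset.card_pos.2 this

/-- Conditional independence lemma: if the `A ∪ B`-marginal splits into an
`A`-local and a `B`-local factor, then `p^A p^B = p^{A∪B} p^{A∩B}`. -/
lemma CI (p : (∀ v, I v) → ℝ) (A B : Finset V) (F g : (∀ v, I v) → ℝ)
    (hF : ∀ y y', (∀ v ∈ A, y v = y' v) → F y = F y')
    (hg : ∀ y y', (∀ v ∈ B, y v = y' v) → g y = g y')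
    (hq : ∀ y, pA p (A ∪ B) y = F y * g y) (i : ∀ v, I v) :
    pA p A i * pA p B i = pA p (A ∪ B) i * pA p (A ∩ B) i := by
  set c : ℝ := ((cyl (A ∪ B) i).card : ℝ) with hcdef
  have hc : 0 < c := card_cyl_pos _ _
  have e1 : c * pA p A i = F i * pA g A i := by
    have h := pA_pA p A (A ∪ B) i
    rw [show A ∪ (A ∪ B) = A ∪ B by rw [← Finset.union_assoc, Finset.union_self],
      show A ∩ (A ∪ B) = A from Finset.inter_eq_left.2 Finset.subset_union_left] at h
    rw [← h]
    simp only [hq]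
    exact pA_pull hF i
  have e2 : c * pA p B i = g i * pA F B i := by
    have h := pA_pA p B (A ∪ B) i
    rw [show B ∪ (A ∪ B) = A ∪ B from Finset.union_eq_right.2 Finset.subset_union_right,
      show B ∩ (A ∪ B) = B from Finset.inter_eq_left.2 Finset.subset_union_right] at h
    rw [← h]
    simp only [hq]
    have : (fun y => F y * g y) = (fun y => g y * F y) := by funext y; ring
    rw [this]
    exact pA_pull hg i
  have e3 : c * (c * pA p (A ∩ B) i) = pA F B i * pA g A i := by
    have h1 := pA_pA (fun y => F y * g y) A B i
    have h2 := pA_pA p (A ∩ B) (A ∪ B) i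
    rw [show (A ∩ B) ∪ (A ∪ B) = A ∪ B from Finset.union_eq_right.2
        (Finset.inter_subset_left.trans Finset.subset_union_left),
      show (A ∩ B) ∩ (A ∪ B) = A ∩ B from Finset.inter_eq_left.2
        (Finset.inter_subset_left.trans Finset.subset_union_left)] at h2
    have h3 : pA (fun y => pA (fun y' => F y' * g y') B y) A i = pA F B i * pA g A i := by
      have hinner : ∀ y, pA (fun y' => F y' * g y') B y = pA F B y * g y := by
        intro y
        have : (fun y' => F y' * g y') = (fun y' => g y' * F y') := by funext y'; ring
        rw [this, pA_pull hg, mul_comm]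
      simp only [hinner]
      apply pA_pull
      intro y y' hyy'
      apply pA_local hF
      intro v hv
      exact hyy' v (Finset.mem_inter.1 hv).2
    rw [h3] at h1
    rw [h1]
    have h4 : pA (fun y' => F y' * g y') (A ∩ B) i = pA (fun y => pA p (A ∪ B) y) (A ∩ B) i := by
      simp only [hq]
    rw [h4, h2]
  have key : (c * pA p A i) * (c * pA p B i) = (c * c) * (pA p (A ∪ B) i * pA p (A ∩ B) i) := by
    rw [e1, e2, hq i]
    calc F i * pA g A i * (g i * pA F B i)
        = (F i * g i) * (pA F B i * pA g A i) := by ring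
      _ = (F i * g i) * (c * (c * pA p (A ∩ B) i)) := by rw [e3]
      _ = c * c * (F i * g i * pA p (A ∩ B) i) := by ring
  have : (c * c) * (pA p A i * pA p B i) = (c * c) * (pA p (A ∪ B) i * pA p (A ∩ B) i) := by
    rw [← key]; ring
  exact mul_left_cancel₀ (by positivity) this

end CI

section Theta

set_option linter.unusedSectionVars false

variable {V : Type*} [Fintype V] [DecidableEq V]
  {I : V → Type*} [∀ v, Fintype (I v)] [∀ v, DecidableEq (I v)]

lemma mem_supp {z j : ∀ v, I v} {v : V} : v ∈ supp z j ↔ j v ≠ z v := by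
  simp [supp]

lemma supp_subset_of_tri {z j' j : ∀ v, I v} (h : tri z j' j) :
    supp z j' ⊆ supp z j := by
  intro v hv
  rw [mem_supp] at hv ⊢
  rw [← h v hv]
  exact hv

lemma supp_update_ne {z j' : ∀ v, I v} {v : V} {w : I v} (hw : w ≠ z v) :
    supp z (Function.update j' v w) = insert v (supp z j') := by
  ext u
  simp only [mem_supp, Finset.mem_insert, Function.update_apply]
  by_cases h : u = v
  · subst h; simp [hw]
  · simp [h, mem_supp]

lemma supp_update_eq {z j' : ∀ v, I v} {v : V} :
    supp z (Function.update j' v (z v)) = (supp z j').erase v := by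
  ext u
  simp only [mem_supp, Finset.mem_erase, Function.update_apply]
  by_cases h : u = v
  · subst h; simp
  · simp [h, mem_supp]

/-- If `A` does not contain the support of `j`, the marginal loglinear parameter
`θ^A_j` vanishes. -/
lemma θA_eq_zero (z : ∀ v, I v) {p : (∀ v, I v) → ℝ} {A : Finset V} {j : ∀ v, I v}
    (hA : ¬ supp z j ⊆ A) : θA z p A j = 0 := by
  obtain ⟨v, hvs, hvA⟩ := Finset.not_subset.1 hA
  have hvj : j v ≠ z v := mem_supp.1 hvs
  unfold θA
  refine Finset.sum_involution
    (fun j' _ => Function.update j' v (if j' v = z v then j v else z v)) ?_ ?_ ?_ ?_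
  · -- f a + f (g a) = 0
    intro j' hj'
    have htri : tri z j' j := by
      simpa [tri] using (Finset.mem_filter.1 hj').2
    have hsub : supp z j' ⊆ supp z j := supp_subset_of_tri htri
    have hlog : pA p A (Function.update j' v (if j' v = z v then j v else z v)) = pA p A j' := by
      apply pA_congr
      intro u hu
      have huv : u ≠ v := fun h => hvA (h ▸ hu)
      simp [Function.update_apply, huv]
    rw [hlog]
    by_cases hc : j' v = z v
    · -- support grows by one
      have hvns : v ∉ supp z j' := by rw [mem_supp]; simpa using hc
      have hcard : (supp z (Function.update j' v (if j' v = z v then j v else z v))).card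
          = (supp z j').card + 1 := by
        rw [if_pos hc, supp_update_ne hvj, Finset.card_insert_of_notMem hvns]
      have hle : (supp z j').card + 1 ≤ (supp z j).card := by
        have : insert v (supp z j') ⊆ supp z j := by
          rw [Finset.insert_subset_iff]; exact ⟨hvs, hsub⟩
        calc (supp z j').card + 1 = (insert v (supp z j')).card :=
              (Finset.card_insert_of_notMem hvns).symm
          _ ≤ (supp z j).card := Finset.card_le_card this
      rw [hcard]
      have hexp : (supp z j).card - (supp z j').card
          = ((supp z j).card - ((supp z j').card + 1)) + 1 := by omega
      rw [hexp, pow_succ]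
      ring
    · -- support shrinks by one
      have hvin : v ∈ supp z j' := mem_supp.2 hc
      have hcard : (supp z (Function.update j' v (if j' v = z v then j v else z v))).card
          = (supp z j').card - 1 := by
        rw [if_neg hc, supp_update_eq, Finset.card_erase_of_mem hvin]
      have h1 : 1 ≤ (supp z j').card := Finset.card_pos.2 ⟨v, hvin⟩
      have h2 : (supp z j').card ≤ (supp z j).card := Finset.card_le_card hsub
      rw [hcard]
      have hexp : (supp z j).card - ((supp z j').card - 1)
          = ((supp z j).card - (supp z j').card) + 1 := by omega
      rw [hexp, pow_succ]
      ring
  · -- g a ≠ a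
    intro j' _ _
    intro h
    have := congrFun h v
    beta_reduce at this
    rw [Function.update_self] at this
    by_cases hc : j' v = z v
    · rw [if_pos hc] at this; exact hvj (this ▸ hc ▸ rfl)
    · rw [if_neg hc] at this; exact hc this.symm
  · -- g a ∈ s
    intro j' hj'
    have htri : tri z j' j := by
      simpa [tri] using (Finset.mem_filter.1 hj').2
    refine Finset.mem_filter.2 ⟨Finset.mem_univ _, ?_⟩
    beta_reduce
    intro u hu
    by_cases huv : u = v
    · subst huv
      rw [Function.update_self] at hu ⊢
      by_cases hc : j' u = z u
      · rw [if_pos hc]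
      · rw [if_neg hc] at hu; exact absurd rfl hu
    · rw [Function.update_of_ne huv] at hu ⊢
      exact htri u hu
  · -- involution
    intro j' hj'
    have htri : tri z j' j := by
      simpa [tri] using (Finset.mem_filter.1 hj').2
    beta_reduce
    funext u
    by_cases huv : u = v
    · subst huv
      by_cases hc : j' u = z u
      · simp [Function.update_self, hc, hvj]
      · simp [Function.update_self, hc, htri u hc]
    · simp [Function.update_of_ne huv]

end Theta

section Univ

variable {V : Type*} [Fintype V] {I : V → Type*} [∀ v, Fintype (I v)]

lemma cyl_univ (m : ∀ v, I v) : cyl (Finset.univ : Finset V) m = {m} := by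
  ext y
  simp only [mem_cyl, Finset.mem_univ, Finset.mem_singleton, true_implies]
  constructor
  · intro h; funext v; exact h v
  · intro h v; rw [h]

lemma pA_univ (p : (∀ v, I v) → ℝ) (m : ∀ v, I v) :
    pA p (Finset.univ : Finset V) m = p m := by
  rw [pA_eq_sum_cyl, cyl_univ, Finset.sum_singleton]

end Univ

/-- Decomposable model parameter formula: for a strictly positive distribution Markov
with respect to a decomposable graph `G` with a perfect ordering of cliques
`C 0, …, C (k-1)` and separators `Sep l = C l ∩ (C 0 ∪ ⋯ ∪ C (l-1))`, the joint
probabilities factor as `p(i) = ∏_l p^{C l}(i_{C l}) / ∏_{l ≥ 1} p^{Sep l}(i_{Sep l})`,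
and each loglinear parameter satisfies
`θ_j = ∑_{l : S(j) ⊆ C l} θ^{C l}_j − ∑_{l ≥ 1 : S(j) ⊆ Sep l} θ^{Sep l}_j`. -/
theorem stmt17 {V : Type*} [Fintype V] [DecidableEq V]
    {I : V → Type*} [∀ v, Fintype (I v)] [∀ v, DecidableEq (I v)]
    (z : ∀ v, I v)
    (G : SimpleGraph V) (k : ℕ)
    (C : Fin k → Finset V) (Sep : Fin k → Finset V)
    (hclique : ∀ l, G.IsClique (↑(C l) : Set V))
    (hcover : Finset.univ.biUnion C = Finset.univ)
    -- perfect ordering: running intersection property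
    (hSep : ∀ l : Fin k, 0 < l.val →
      Sep l = C l ∩ (Finset.univ.filter (fun m : Fin k => m < l)).biUnion C ∧
        ∃ m : Fin k, m < l ∧ Sep l ⊆ C m)
    -- a strictly positive probability, Markov w.r.t. G (factorization over the cliques)
    (p : (∀ v, I v) → ℝ) (hp : ∀ i, 0 < p i) (hsum : ∑ i : ∀ v, I v, p i = 1)
    (hMarkov : ∃ φ : Fin k → (∀ v, I v) → ℝ,
      (∀ l, ∀ i i' : ∀ v, I v, (∀ v ∈ C l, i v = i' v) → φ l i = φ l i') ∧
        ∀ i, p i = ∏ l, φ l i) :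
    (∀ i, p i = (∏ l, pA p (C l) i) /
        ∏ l ∈ Finset.univ.filter (fun l : Fin k => 0 < l.val), pA p (Sep l) i) ∧
    (∀ j : ∀ v, I v,
      θA z p Finset.univ j =
        (∑ l ∈ Finset.univ.filter (fun l : Fin k => supp z j ⊆ C l), θA z p (C l) j) -
          ∑ l ∈ Finset.univ.filter (fun l : Fin k => 0 < l.val ∧ supp z j ⊆ Sep l),
            θA z p (Sep l) j) := by
  obtain ⟨φ, hφloc, hφ⟩ := hMarkov
  have hSpos : ∀ (A : Finset V) (y : ∀ v, I v), 0 < pA p A y := fun A y => pA_pos hp A y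
  -- First establish the factorization (part 1) in product form.
  have part1 : ∀ i, p i * (∏ l ∈ Finset.univ.filter (fun l : Fin k => 0 < l.val),
      pA p (Sep l) i) = ∏ l, pA p (C l) i := by
    rcases Nat.eq_zero_or_pos k with hk | hk
    · -- k = 0 : V is empty
      subst hk
      intro i
      have hVempty : (Finset.univ : Finset V) = ∅ := by
        rw [← hcover]
        simp
      have huniv : (Finset.univ : Finset (∀ v, I v)) = {i} := by
        ext y
        simp only [Finset.mem_univ, Finset.mem_singleton, true_iff]
        funext v
        exact absurd (hVempty ▸ Finset.mem_univ v) (Finset.notMem_empty v)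
      have hpi : p i = 1 := by rw [← hsum, huniv, Finset.sum_singleton]
      simp [hpi]
    · -- k ≥ 1
      set H : ℕ → Finset V :=
        fun t => (Finset.univ.filter (fun m : Fin k => m.val < t)).biUnion C with hHdef
      have hHmono : ∀ t, H t ⊆ H (t + 1) := by
        intro t
        apply Finset.biUnion_subset_biUnion_of_subset_left
        intro m hm
        simp only [Finset.mem_filter, Finset.mem_univ, true_and] at hm ⊢
        omega
      have hCsubH : ∀ (m : Fin k) (t : ℕ), m.val < t → C m ⊆ H t := by
        intro m t hm
        apply Finset.subset_biUnion_of_mem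
        simp only [Finset.mem_filter, Finset.mem_univ, true_and]
        exact hm
      have hfilter_succ : ∀ (t : ℕ) (ht : t < k),
          Finset.univ.filter (fun m : Fin k => m.val < t + 1)
            = insert ⟨t, ht⟩ (Finset.univ.filter (fun m : Fin k => m.val < t)) := by
        intro t ht
        ext m
        simp only [Finset.mem_filter, Finset.mem_univ, true_and, Finset.mem_insert, Fin.ext_iff]
        omega
      have hnotmem : ∀ (t : ℕ) (ht : t < k),
          (⟨t, ht⟩ : Fin k) ∉ Finset.univ.filter (fun m : Fin k => m.val < t) := by
        intro t ht
        simp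
      have hH_succ : ∀ (t : ℕ) (ht : t < k), H (t + 1) = C ⟨t, ht⟩ ∪ H t := by
        intro t ht
        simp only [hHdef]
        rw [hfilter_succ t ht, Finset.biUnion_insert]
      have hSepH : ∀ (t : ℕ) (ht : t < k) (h1 : 1 ≤ t), Sep ⟨t, ht⟩ = C ⟨t, ht⟩ ∩ H t := by
        intro t ht h1
        have hfeq : Finset.univ.filter (fun m : Fin k => m < (⟨t, ht⟩ : Fin k))
            = Finset.univ.filter (fun m : Fin k => m.val < t) := by
          ext m
          simp [Fin.lt_def]
        rw [(hSep ⟨t, ht⟩ h1).1, hfeq]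
      -- downward induction: factorization of the marginal on H t over the cliques C 0,…,C (t-1)
      have Q : ∀ d t, t + d = k → 1 ≤ t → ∃ ψ : Fin k → (∀ v, I v) → ℝ,
          (∀ m : Fin k, m.val < t → ∀ y y', (∀ v ∈ C m, y v = y' v) → ψ m y = ψ m y') ∧
          (∀ y, pA p (H t) y
            = ∏ m ∈ Finset.univ.filter (fun m : Fin k => m.val < t), ψ m y) := by
        intro d
        induction d with
        | zero =>
          intro t htk _
          refine ⟨φ, fun m _ => hφloc m, fun y => ?_⟩
          have hfk : Finset.univ.filter (fun m : Fin k => m.val < t)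
              = (Finset.univ : Finset (Fin k)) := by
            ext m
            simp only [Finset.mem_filter, Finset.mem_univ, true_and, iff_true]
            omega
          have hHk : H t = Finset.univ := by
            simp only [hHdef]
            rw [hfk, hcover]
          rw [hHk, hfk, pA_univ]
          exact hφ y
        | succ d ih =>
          intro t htk h1
          have ht : t < k := by omega
          obtain ⟨ψ, hψloc, hψ⟩ := ih (t + 1) (by omega) (by omega)
          set lt : Fin k := ⟨t, ht⟩ with hltdef
          obtain ⟨σ, hσlt, hσsub⟩ := (hSep lt h1).2
          have hσt : σ.val < t := by
            have := hσlt
            rw [Fin.lt_def] at this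
            simpa [hltdef] using this
          have hSepHt : Sep lt = C lt ∩ H t := hSepH t ht h1
          have hψltloc := hψloc lt (Nat.lt_succ_self t)
          -- the marginal of the last factor
          set Ψ : (∀ v, I v) → ℝ := fun y => pA (ψ lt) (H t) y with hΨdef
          have hΨloc : ∀ y y', (∀ v ∈ C σ, y v = y' v) → Ψ y = Ψ y' := by
            intro y y' hyy'
            apply pA_local hψltloc
            intro v hv
            apply hyy'
            apply hσsub
            rw [hSepHt]
            rw [Finset.mem_inter] at hv ⊢
            exact ⟨hv.2, hv.1⟩
          set c : ℝ := ((cyl (H (t + 1)) z).card : ℝ) with hcdef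
          have hc : 0 < c := card_cyl_pos _ _
          have hFloc : ∀ y y', (∀ v ∈ H t, y v = y' v) →
              (∏ m ∈ Finset.univ.filter (fun m : Fin k => m.val < t), ψ m y)
                = ∏ m ∈ Finset.univ.filter (fun m : Fin k => m.val < t), ψ m y' := by
            intro y y' hyy'
            refine Finset.prod_congr rfl (fun m hm => ?_)
            have hmt : m.val < t := by
              simpa using (Finset.mem_filter.1 hm).2
            exact hψloc m (by omega) y y' (fun v hv => hyy' v (hCsubH m t hmt hv))
          have hkey : ∀ y, c * pA p (H t) y
              = (∏ m ∈ Finset.univ.filter (fun m : Fin k => m.val < t), ψ m y) * Ψ y := by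
            intro y
            have h := pA_pA p (H t) (H (t + 1)) y
            rw [Finset.union_eq_right.2 (hHmono t), Finset.inter_eq_left.2 (hHmono t)] at h
            rw [card_cyl_const (H (t + 1)) y z] at h
            rw [← hcdef] at h
            rw [← h]
            simp only [hψ]
            rw [hfilter_succ t ht]
            simp only [Finset.prod_insert (hnotmem t ht)]
            have hcomm : (fun y' => ψ lt y' *
                ∏ m ∈ Finset.univ.filter (fun m : Fin k => m.val < t), ψ m y')
                = (fun y' => (∏ m ∈ Finset.univ.filter (fun m : Fin k => m.val < t), ψ m y')
                    * ψ lt y') := by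
              funext y'; ring
            rw [hcomm, pA_pull hFloc]
          refine ⟨fun m y => if m = σ then ψ σ y * Ψ y / c else ψ m y, ?_, ?_⟩
          · intro m hm y y' hyy'
            beta_reduce
            by_cases hmσ : m = σ
            · subst hmσ
              rw [if_pos rfl, if_pos rfl,
                hψloc m (by omega) y y' hyy', hΨloc y y' hyy']
            · rw [if_neg hmσ, if_neg hmσ]
              exact hψloc m (by omega) y y' hyy'
          · intro y
            beta_reduce
            have hσmem : σ ∈ Finset.univ.filter (fun m : Fin k => m.val < t) := by
              simp only [Finset.mem_filter, Finset.mem_univ, true_and]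
              exact hσt
            rw [← Finset.mul_prod_erase _ _ hσmem, if_pos rfl]
            have herase : ∏ m ∈ (Finset.univ.filter (fun m : Fin k => m.val < t)).erase σ,
                (if m = σ then ψ σ y * Ψ y / c else ψ m y)
                = ∏ m ∈ (Finset.univ.filter (fun m : Fin k => m.val < t)).erase σ, ψ m y := by
              refine Finset.prod_congr rfl (fun m hm => ?_)
              rw [if_neg (Finset.mem_erase.1 hm).1]
            rw [herase]
            have hkey' := hkey y
            rw [← Finset.mul_prod_erase _ _ hσmem] at hkey'
            field_simp
            linarith [hkey']
      -- upward induction: telescoping factorization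
      have R : ∀ t, 1 ≤ t → t ≤ k → ∀ i, pA p (H t) i *
          ∏ m ∈ Finset.univ.filter (fun m : Fin k => 0 < m.val ∧ m.val < t), pA p (Sep m) i
          = ∏ m ∈ Finset.univ.filter (fun m : Fin k => m.val < t), pA p (C m) i := by
        intro t
        induction t with
        | zero => omega
        | succ t ihR =>
          intro _ hsk i
          have ht : t < k := by omega
          set lt : Fin k := ⟨t, ht⟩ with hltdef
          rcases Nat.eq_zero_or_pos t with ht0 | ht1
          · -- base case t = 0
            subst ht0
            have hfS : Finset.univ.filter (fun m : Fin k => 0 < m.val ∧ m.val < 1)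
                = (∅ : Finset (Fin k)) := by
              ext m
              simp only [Finset.mem_filter, Finset.mem_univ, true_and, Finset.notMem_empty,
                iff_false]
              omega
            have hf1 : Finset.univ.filter (fun m : Fin k => m.val < 1) = {lt} := by
              ext m
              simp only [Finset.mem_filter, Finset.mem_univ, true_and, Finset.mem_singleton,
                Fin.ext_iff, hltdef]
              omega
            have hH1 : H 1 = C lt := by
              simp only [hHdef]
              rw [hf1, Finset.singleton_biUnion]
            rw [hfS, hf1, hH1, Finset.prod_empty, Finset.prod_singleton, mul_one]
          · -- inductive step, t ≥ 1
            obtain ⟨ψ, hψloc, hψ⟩ := Q (k - (t + 1)) (t + 1) (by omega) (by omega)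
            have hSepHt : Sep lt = C lt ∩ H t := hSepH t ht ht1
            have hψltloc := hψloc lt (Nat.lt_succ_self t)
            have hFloc : ∀ y y', (∀ v ∈ H t, y v = y' v) →
                (∏ m ∈ Finset.univ.filter (fun m : Fin k => m.val < t), ψ m y)
                  = ∏ m ∈ Finset.univ.filter (fun m : Fin k => m.val < t), ψ m y' := by
              intro y y' hyy'
              refine Finset.prod_congr rfl (fun m hm => ?_)
              have hmt : m.val < t := by
                simpa using (Finset.mem_filter.1 hm).2
              exact hψloc m (by omega) y y' (fun v hv => hyy' v (hCsubH m t hmt hv))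
            have hq : ∀ y, pA p (H t ∪ C lt) y
                = (∏ m ∈ Finset.univ.filter (fun m : Fin k => m.val < t), ψ m y) * ψ lt y := by
              intro y
              have hU : H t ∪ C lt = H (t + 1) := by
                rw [hH_succ t ht, Finset.union_comm]
              rw [hU, hψ y, hfilter_succ t ht, Finset.prod_insert (hnotmem t ht)]
              ring
            have hCI := CI p (H t) (C lt)
              (fun y => ∏ m ∈ Finset.univ.filter (fun m : Fin k => m.val < t), ψ m y)
              (ψ lt) hFloc hψltloc hq i
            rw [show H t ∪ C lt = H (t + 1) by rw [hH_succ t ht, Finset.union_comm],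
              show H t ∩ C lt = Sep lt by rw [hSepHt, Finset.inter_comm]] at hCI
            have hfC : Finset.univ.filter (fun m : Fin k => m.val < t + 1)
                = insert lt (Finset.univ.filter (fun m : Fin k => m.val < t)) :=
              hfilter_succ t ht
            have hfS : Finset.univ.filter (fun m : Fin k => 0 < m.val ∧ m.val < t + 1)
                = insert lt (Finset.univ.filter (fun m : Fin k => 0 < m.val ∧ m.val < t)) := by
              ext m
              simp only [Finset.mem_filter, Finset.mem_univ, true_and, Finset.mem_insert,
                Fin.ext_iff, hltdef]
              omega
            have hnm1 : lt ∉ Finset.univ.filter (fun m : Fin k => 0 < m.val ∧ m.val < t) := by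
              simp [hltdef]
            rw [hfC, hfS, Finset.prod_insert (hnotmem t ht), Finset.prod_insert hnm1]
            have hihR := ihR (by omega) (by omega) i
            calc pA p (H (t + 1)) i * (pA p (Sep lt) i *
                ∏ m ∈ Finset.univ.filter (fun m : Fin k => 0 < m.val ∧ m.val < t),
                  pA p (Sep m) i)
                = (pA p (H (t + 1)) i * pA p (Sep lt) i) *
                  ∏ m ∈ Finset.univ.filter (fun m : Fin k => 0 < m.val ∧ m.val < t),
                    pA p (Sep m) i := by ring
              _ = (pA p (H t) i * pA p (C lt) i) *
                  ∏ m ∈ Finset.univ.filter (fun m : Fin k => 0 < m.val ∧ m.val < t),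
                    pA p (Sep m) i := by rw [← hCI]
              _ = pA p (C lt) i * (pA p (H t) i *
                  ∏ m ∈ Finset.univ.filter (fun m : Fin k => 0 < m.val ∧ m.val < t),
                    pA p (Sep m) i) := by ring
              _ = pA p (C lt) i *
                  ∏ m ∈ Finset.univ.filter (fun m : Fin k => m.val < t), pA p (C m) i := by
                  rw [hihR]
      intro i
      have hR := R k (by omega) le_rfl i
      have hfk : Finset.univ.filter (fun m : Fin k => m.val < k)
          = (Finset.univ : Finset (Fin k)) := by
        ext m; simp [m.isLt]
      have hfS : Finset.univ.filter (fun m : Fin k => 0 < m.val ∧ m.val < k)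
          = Finset.univ.filter (fun m : Fin k => 0 < m.val) := by
        ext m; simp [m.isLt]
      have hHk : H k = Finset.univ := by
        simp only [hHdef]
        rw [hfk, hcover]
      rw [hHk, hfk, hfS, pA_univ] at hR
      exact hR
  have hprodS : ∀ i, (0:ℝ) < ∏ l ∈ Finset.univ.filter (fun l : Fin k => 0 < l.val),
      pA p (Sep l) i := fun i => Finset.prod_pos (fun l _ => hSpos _ _)
  have hprodC : ∀ i, (0:ℝ) < ∏ l, pA p (C l) i :=
    fun i => Finset.prod_pos (fun l _ => hSpos _ _)
  have part1div : ∀ i, p i = (∏ l, pA p (C l) i) /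
      ∏ l ∈ Finset.univ.filter (fun l : Fin k => 0 < l.val), pA p (Sep l) i := by
    intro i
    rw [eq_div_iff (ne_of_gt (hprodS i))]
    exact part1 i
  refine ⟨part1div, ?_⟩
  intro j
  -- the log of the factorization
  have hlog : ∀ y, Real.log (p y / p z)
      = (∑ l, Real.log (pA p (C l) y / pA p (C l) z))
        - ∑ l ∈ Finset.univ.filter (fun l : Fin k => 0 < l.val),
            Real.log (pA p (Sep l) y / pA p (Sep l) z) := by
    intro y
    rw [part1div y, part1div z]
    rw [Real.log_div (div_ne_zero (ne_of_gt (hprodC y)) (ne_of_gt (hprodS y)))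
        (div_ne_zero (ne_of_gt (hprodC z)) (ne_of_gt (hprodS z))),
      Real.log_div (ne_of_gt (hprodC y)) (ne_of_gt (hprodS y)),
      Real.log_div (ne_of_gt (hprodC z)) (ne_of_gt (hprodS z)),
      Real.log_prod (fun l _ => ne_of_gt (hSpos (C l) y)),
      Real.log_prod (fun l _ => ne_of_gt (hSpos (Sep l) y)),
      Real.log_prod (fun l _ => ne_of_gt (hSpos (C l) z)),
      Real.log_prod (fun l _ => ne_of_gt (hSpos (Sep l) z))]
    have h1 : ∑ l, Real.log (pA p (C l) y / pA p (C l) z)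
        = ∑ l, (Real.log (pA p (C l) y) - Real.log (pA p (C l) z)) :=
      Finset.sum_congr rfl (fun l _ =>
        Real.log_div (ne_of_gt (hSpos (C l) y)) (ne_of_gt (hSpos (C l) z)))
    have h2 : ∑ l ∈ Finset.univ.filter (fun l : Fin k => 0 < l.val),
          Real.log (pA p (Sep l) y / pA p (Sep l) z)
        = ∑ l ∈ Finset.univ.filter (fun l : Fin k => 0 < l.val),
          (Real.log (pA p (Sep l) y) - Real.log (pA p (Sep l) z)) :=
      Finset.sum_congr rfl (fun l _ =>
        Real.log_div (ne_of_gt (hSpos (Sep l) y)) (ne_of_gt (hSpos (Sep l) z)))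
    rw [h1, h2, Finset.sum_sub_distrib, Finset.sum_sub_distrib]
    ring
  -- swap the order of summation
  have swap : θA z p Finset.univ j
      = (∑ l, θA z p (C l) j)
        - ∑ l ∈ Finset.univ.filter (fun l : Fin k => 0 < l.val), θA z p (Sep l) j := by
    unfold θA
    simp only [pA_univ]
    calc ∑ j' ∈ Finset.univ.filter (fun j' => tri z j' j),
          (-1 : ℝ) ^ ((supp z j).card - (supp z j').card) * Real.log (p j' / p z)
        = ∑ j' ∈ Finset.univ.filter (fun j' => tri z j' j),
          ((∑ l, (-1 : ℝ) ^ ((supp z j).card - (supp z j').card)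
              * Real.log (pA p (C l) j' / pA p (C l) z))
            - ∑ l ∈ Finset.univ.filter (fun l : Fin k => 0 < l.val),
              (-1 : ℝ) ^ ((supp z j).card - (supp z j').card)
                * Real.log (pA p (Sep l) j' / pA p (Sep l) z)) := by
          refine Finset.sum_congr rfl (fun j' _ => ?_)
          rw [hlog j', mul_sub, Finset.mul_sum, Finset.mul_sum]
      _ = (∑ j' ∈ Finset.univ.filter (fun j' => tri z j' j),
            ∑ l, (-1 : ℝ) ^ ((supp z j).card - (supp z j').card)
              * Real.log (pA p (C l) j' / pA p (C l) z))
          - ∑ j' ∈ Finset.univ.filter (fun j' => tri z j' j),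
            ∑ l ∈ Finset.univ.filter (fun l : Fin k => 0 < l.val),
              (-1 : ℝ) ^ ((supp z j).card - (supp z j').card)
                * Real.log (pA p (Sep l) j' / pA p (Sep l) z) :=
          Finset.sum_sub_distrib _ _
      _ = (∑ l, ∑ j' ∈ Finset.univ.filter (fun j' => tri z j' j),
            (-1 : ℝ) ^ ((supp z j).card - (supp z j').card)
              * Real.log (pA p (C l) j' / pA p (C l) z))
          - ∑ l ∈ Finset.univ.filter (fun l : Fin k => 0 < l.val),
            ∑ j' ∈ Finset.univ.filter (fun j' => tri z j' j),
              (-1 : ℝ) ^ ((supp z j).card - (supp z j').card)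
                * Real.log (pA p (Sep l) j' / pA p (Sep l) z) :=
          congrArg₂ (fun a b => a - b) Finset.sum_comm Finset.sum_comm
  have hCsplit : (∑ l ∈ Finset.univ.filter (fun l : Fin k => supp z j ⊆ C l),
      θA z p (C l) j) = ∑ l, θA z p (C l) j := by
    rw [← Finset.sum_filter_add_sum_filter_not Finset.univ
      (fun l : Fin k => supp z j ⊆ C l) (fun l => θA z p (C l) j)]
    have hzero : ∑ l ∈ Finset.univ.filter (fun l : Fin k => ¬ supp z j ⊆ C l),
        θA z p (C l) j = 0 :=
      Finset.sum_eq_zero (fun l hl => θA_eq_zero z (Finset.mem_filter.1 hl).2)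
    rw [hzero, add_zero]
  have hSsplit : (∑ l ∈ Finset.univ.filter
        (fun l : Fin k => 0 < l.val ∧ supp z j ⊆ Sep l), θA z p (Sep l) j)
      = ∑ l ∈ Finset.univ.filter (fun l : Fin k => 0 < l.val), θA z p (Sep l) j := by
    have hff : Finset.univ.filter (fun l : Fin k => 0 < l.val ∧ supp z j ⊆ Sep l)
        = (Finset.univ.filter (fun l : Fin k => 0 < l.val)).filter
            (fun l => supp z j ⊆ Sep l) := by
      ext l
      simp only [Finset.mem_filter, Finset.mem_univ, true_and, and_assoc]
    rw [hff, ← Finset.sum_filter_add_sum_filter_not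
      (Finset.univ.filter (fun l : Fin k => 0 < l.val))
      (fun l => supp z j ⊆ Sep l) (fun l => θA z p (Sep l) j)]
    have hzero : ∑ l ∈ (Finset.univ.filter (fun l : Fin k => 0 < l.val)).filter
        (fun l => ¬ supp z j ⊆ Sep l), θA z p (Sep l) j = 0 :=
      Finset.sum_eq_zero (fun l hl => θA_eq_zero z (Finset.mem_filter.1 hl).2)
    rw [hzero, add_zero]
  rw [hCsplit, hSsplit]
  exact swap
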